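/- For every σ > 0 and every h ∈ ℝ, | σ² E[sech²(h + σZ)] − (3/2) σ² E[sech⁴(h + σZ)] | ≤ Λ₀/σ, where Λ₀ = (π² − 3)/(6√(2π)). -/

import Mathlib

open MeasureTheory Filter

/-- Standard Gaussian density. -/
noncomputable def stdGauss (z : ℝ) : ℝ := Real.exp (-z ^ 2 / 2) / Real.sqrt (2 * Real.pi)

/-- Gaussian expectation `E[f(h + σ Z)]` for a standard Gaussian `Z`. -/
noncomputable def gexp (f : ℝ → ℝ) (σ h : ℝ) : ℝ := ∫ z, f (h + σ * z) * stdGauss z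

/-- Hyperbolic secant. -/
noncomputable def sech (x : ℝ) : ℝ := 1 / Real.cosh x


lemma cosh_ne (x : ℝ) : Real.cosh x ≠ 0 := (Real.cosh_pos x).ne'

lemma sech_pos (x : ℝ) : 0 < sech x := by
  unfold sech; positivity

lemma sech_le_one (x : ℝ) : sech x ≤ 1 := by
  unfold sech
  rw [div_le_one (Real.cosh_pos x)]
  exact Real.one_le_cosh x

lemma tanh_sq (x : ℝ) : Real.tanh x ^ 2 = 1 - sech x ^ 2 := by
  unfold sech
  rw [Real.tanh_eq_sinh_div_cosh]
  have h := Real.cosh_sq_sub_sinh_sq x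
  field_simp
  linarith

lemma abs_tanh_le_one (x : ℝ) : |Real.tanh x| ≤ 1 := by
  have h := tanh_sq x
  have h2 : sech x ^ 2 ≤ 1 := by nlinarith [sq_nonneg (Real.tanh x)]
  have h3 : Real.tanh x ^ 2 ≤ 1 := by nlinarith [sq_nonneg (sech x)]
  nlinarith [sq_abs (Real.tanh x), abs_nonneg (Real.tanh x)]

lemma hasDerivAt_sech (x : ℝ) : HasDerivAt sech (-(sech x * Real.tanh x)) x := by
  have h := (Real.hasDerivAt_cosh x).inv (cosh_ne x)
  have he : sech = fun x => (Real.cosh x)⁻¹ := by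
    funext y; unfold sech; rw [one_div]
  have hd : -(sech x * Real.tanh x) = -Real.sinh x / Real.cosh x ^ 2 := by
    unfold sech
    rw [Real.tanh_eq_sinh_div_cosh]
    field_simp
  rw [hd, he]
  exact h

lemma hasDerivAt_tanh (x : ℝ) : HasDerivAt Real.tanh (sech x ^ 2) x := by
  have h := (Real.hasDerivAt_sinh x).div (Real.hasDerivAt_cosh x) (cosh_ne x)
  have he : Real.tanh = fun x => Real.sinh x / Real.cosh x := by
    funext y; exact Real.tanh_eq_sinh_div_cosh y
  rw [he]
  refine h.congr_deriv ?_
  have h2 := Real.cosh_sq_sub_sinh_sq x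
  unfold sech
  field_simp
  linarith

lemma hasDerivAt_sech_sq (x : ℝ) :
    HasDerivAt (fun y => sech y ^ 2) (-2 * sech x ^ 2 * Real.tanh x) x := by
  have h := (hasDerivAt_sech x).pow 2
  refine h.congr_deriv ?_
  ring

lemma continuous_sech : Continuous sech :=
  continuous_const.div Real.continuous_cosh cosh_ne

lemma tanh_eq_exp (x : ℝ) :
    Real.tanh x = (1 - Real.exp (-(2 * x))) / (1 + Real.exp (-(2 * x))) := by
  rw [Real.tanh_eq_sinh_div_cosh, Real.sinh_eq, Real.cosh_eq]
  have h3 : Real.exp x * Real.exp (-(2 * x)) = Real.exp (-x) := by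
    rw [← Real.exp_add]; ring_nf
  have hp1 : 0 < Real.exp x + Real.exp (-x) := by positivity
  have hp2 : 0 < 1 + Real.exp (-(2 * x)) := by positivity
  field_simp
  have h3' : Real.exp x * Real.exp (-(x * 2)) = Real.exp (-x) := by rw [mul_comm x 2]; exact h3
  nlinarith [h3, h3']

lemma tanh_tendsto_atTop : Tendsto Real.tanh atTop (nhds 1) := by
  have h : Tendsto (fun x : ℝ => Real.exp (-(2 * x))) atTop (nhds 0) := by
    apply Real.tendsto_exp_atBot.comp
    exact tendsto_neg_atTop_atBot.comp (Tendsto.const_mul_atTop two_pos tendsto_id)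
  have hnum : Tendsto (fun x : ℝ => 1 - Real.exp (-(2 * x))) atTop (nhds 1) := by
    simpa using tendsto_const_nhds.sub h
  have hden : Tendsto (fun x : ℝ => 1 + Real.exp (-(2 * x))) atTop (nhds 1) := by
    simpa using tendsto_const_nhds.add h
  have h2 : Tendsto (fun x : ℝ => (1 - Real.exp (-(2 * x))) / (1 + Real.exp (-(2 * x))))
      atTop (nhds 1) := by
    simpa [Pi.div_def] using hnum.div hden one_ne_zero
  exact h2.congr (fun x => (tanh_eq_exp x).symm)

lemma tanh_tendsto_atBot : Tendsto Real.tanh atBot (nhds (-1)) := by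
  have h : Tendsto (fun x : ℝ => -Real.tanh (-x)) atBot (nhds (-1)) := by
    have := (tanh_tendsto_atTop.comp tendsto_neg_atBot_atTop).neg
    simpa using this
  exact h.congr (fun x => by rw [Real.tanh_neg, neg_neg])

lemma sqrt2pi_pos : 0 < Real.sqrt (2 * Real.pi) :=
  Real.sqrt_pos.2 (by positivity)

lemma stdGauss_nonneg (z : ℝ) : 0 ≤ stdGauss z := by
  unfold stdGauss; positivity

lemma hasDerivAt_stdGauss (z : ℝ) : HasDerivAt stdGauss (-z * stdGauss z) z := by
  have h1 : HasDerivAt (fun z : ℝ => -z ^ 2 / 2) (-z) z := by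
    have := ((hasDerivAt_pow 2 z).neg).div_const 2
    refine this.congr_deriv ?_
    push_cast
    ring
  have h2 := (h1.exp).div_const (Real.sqrt (2 * Real.pi))
  have he : stdGauss = fun z : ℝ => Real.exp (-z ^ 2 / 2) / Real.sqrt (2 * Real.pi) := rfl
  rw [he]
  refine h2.congr_deriv ?_
  beta_reduce
  ring

lemma continuous_stdGauss : Continuous stdGauss := by
  unfold stdGauss
  exact (Real.continuous_exp.comp (by continuity)).div_const _

lemma integrable_stdGauss : Integrable stdGauss := by
  have h := (integrable_exp_neg_mul_sq (by norm_num : (0:ℝ) < 1/2)).div_const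
    (Real.sqrt (2 * Real.pi))
  apply h.congr
  filter_upwards with z
  unfold stdGauss
  ring_nf

lemma integrable_sq_stdGauss : Integrable (fun z => z ^ 2 * stdGauss z) := by
  have h := (integrable_rpow_mul_exp_neg_mul_sq (by norm_num : (0:ℝ) < 1/2)
    (by norm_num : (-1:ℝ) < 2)).div_const (Real.sqrt (2 * Real.pi))
  apply h.congr
  filter_upwards with z
  rw [show ((2:ℝ) = ((2:ℕ):ℝ)) by norm_num, Real.rpow_natCast]
  unfold stdGauss
  ring_nf

lemma stdGauss_tendsto_atTop : Tendsto stdGauss atTop (nhds 0) := by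
  have h : Tendsto (fun z : ℝ => Real.exp (-z ^ 2 / 2)) atTop (nhds 0) := by
    apply Real.tendsto_exp_atBot.comp
    have : Tendsto (fun z : ℝ => z ^ 2 / 2) atTop atTop :=
      (tendsto_pow_atTop (by norm_num)).atTop_div_const (by norm_num)
    simpa [neg_div] using (tendsto_neg_atBot_iff.mpr this)
  have := h.div_const (Real.sqrt (2 * Real.pi))
  rw [zero_div] at this
  exact this

lemma stdGauss_neg (z : ℝ) : stdGauss (-z) = stdGauss z := by
  unfold stdGauss
  rw [neg_sq]

lemma stdGauss_tendsto_atBot : Tendsto stdGauss atBot (nhds 0) := by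
  have h := stdGauss_tendsto_atTop.comp tendsto_neg_atBot_atTop
  exact h.congr (fun z => stdGauss_neg z)

lemma mul_stdGauss_tendsto_cocompact :
    Tendsto (fun z => z * stdGauss z) (cocompact ℝ) (nhds 0) := by
  have hB := (tendsto_rpow_abs_mul_exp_neg_mul_sq_cocompact
    (by norm_num : (0:ℝ) < 1/2) 1).div_const (Real.sqrt (2 * Real.pi))
  rw [zero_div] at hB
  apply squeeze_zero_norm _ hB
  intro z
  rw [Real.norm_eq_abs, abs_mul, abs_of_nonneg (stdGauss_nonneg z), Real.rpow_one]
  unfold stdGauss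
  rw [show -z ^ 2 / 2 = -(1/2) * z ^ 2 by ring]
  rw [mul_div_assoc]

lemma mul_stdGauss_tendsto_atTop : Tendsto (fun z => z * stdGauss z) atTop (nhds 0) :=
  mul_stdGauss_tendsto_cocompact.mono_left atTop_le_cocompact

lemma mul_stdGauss_tendsto_atBot : Tendsto (fun z => z * stdGauss z) atBot (nhds 0) :=
  mul_stdGauss_tendsto_cocompact.mono_left atBot_le_cocompact

open Set in
set_option maxHeartbeats 1000000 in
lemma sech_sq_integral (σ h : ℝ) (hσ : 0 < σ) :
    Integrable (fun z : ℝ => sech (h + σ * z) ^ 2) ∧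
      ∫ z : ℝ, sech (h + σ * z) ^ 2 = 2 * σ⁻¹ := by
  have hσ' : σ ≠ 0 := hσ.ne'
  have hinner : ∀ z : ℝ, HasDerivAt (fun z : ℝ => h + σ * z) σ z := by
    intro z
    simpa using ((hasDerivAt_id z).const_mul σ).const_add h
  have hT : ∀ z : ℝ, HasDerivAt (fun z : ℝ => Real.tanh (h + σ * z))
      (sech (h + σ * z) ^ 2 * σ) z := by
    intro z
    have := (hasDerivAt_tanh (h + σ * z)).comp z (hinner z)
    simpa [Function.comp_def] using this
  have hg : ∀ z : ℝ, HasDerivAt (fun z : ℝ => Real.tanh (h + σ * z) * σ⁻¹)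
      (sech (h + σ * z) ^ 2) z := by
    intro z
    have := (hT z).mul_const σ⁻¹
    refine this.congr_deriv ?_
    rw [mul_assoc, mul_inv_cancel₀ hσ', mul_one]
  have htop : Tendsto (fun z : ℝ => Real.tanh (h + σ * z) * σ⁻¹) atTop (nhds (1 * σ⁻¹)) := by
    apply Tendsto.mul_const
    have hi : Tendsto (fun z : ℝ => h + σ * z) atTop atTop :=
      tendsto_atTop_add_const_left _ h (Tendsto.const_mul_atTop hσ tendsto_id)
    exact tanh_tendsto_atTop.comp hi
  have hIntIoi : IntegrableOn (fun z : ℝ => sech (h + σ * z) ^ 2) (Ioi 0) :=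
    integrableOn_Ioi_deriv_of_nonneg' (fun x _ => hg x) (fun x _ => sq_nonneg _) htop
  have hIoi : ∫ z in Ioi (0:ℝ), sech (h + σ * z) ^ 2
      = 1 * σ⁻¹ - Real.tanh (h + σ * 0) * σ⁻¹ :=
    integral_Ioi_of_hasDerivAt_of_nonneg' (fun x _ => hg x) (fun x _ => sq_nonneg _) htop
  -- reflected function
  have hinner2 : ∀ z : ℝ, HasDerivAt (fun z : ℝ => h + σ * -z) (-σ) z := by
    intro z
    simpa using (((hasDerivAt_id z).neg).const_mul σ).const_add h
  have hT2 : ∀ z : ℝ, HasDerivAt (fun z : ℝ => Real.tanh (h + σ * -z))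
      (sech (h + σ * -z) ^ 2 * -σ) z := by
    intro z
    have := (hasDerivAt_tanh (h + σ * -z)).comp z (hinner2 z)
    simpa [Function.comp_def] using this
  have hg2 : ∀ z : ℝ, HasDerivAt (fun z : ℝ => Real.tanh (h + σ * -z) * -σ⁻¹)
      (sech (h + σ * -z) ^ 2) z := by
    intro z
    have := (hT2 z).mul_const (-σ⁻¹)
    refine this.congr_deriv ?_
    rw [mul_assoc, neg_mul_neg, mul_inv_cancel₀ hσ', mul_one]
  have htop2 : Tendsto (fun z : ℝ => Real.tanh (h + σ * -z) * -σ⁻¹)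
      atTop (nhds ((-1) * -σ⁻¹)) := by
    apply Tendsto.mul_const
    have hi : Tendsto (fun z : ℝ => h + σ * -z) atTop atBot := by
      have h1 : Tendsto (fun z : ℝ => σ * -z) atTop atBot := by
        have := tendsto_neg_atTop_atBot.comp (Tendsto.const_mul_atTop hσ tendsto_id)
        apply this.congr
        intro z; simp
      exact tendsto_atBot_add_const_left _ h h1
    exact tanh_tendsto_atBot.comp hi
  have hIntIoi2 : IntegrableOn (fun z : ℝ => sech (h + σ * -z) ^ 2) (Ioi 0) :=
    integrableOn_Ioi_deriv_of_nonneg' (fun x _ => hg2 x) (fun x _ => sq_nonneg _) htop2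
  have hIoi2 : ∫ z in Ioi (0:ℝ), sech (h + σ * -z) ^ 2
      = (-1) * -σ⁻¹ - Real.tanh (h + σ * -0) * -σ⁻¹ :=
    integral_Ioi_of_hasDerivAt_of_nonneg' (fun x _ => hg2 x) (fun x _ => sq_nonneg _) htop2
  -- transfer to Iic
  have hIntIic : IntegrableOn (fun z : ℝ => sech (h + σ * z) ^ 2) (Iic 0) := by
    rw [← (Measure.measurePreserving_neg (volume : Measure ℝ)).integrableOn_comp_preimage
      (Homeomorph.neg ℝ).measurableEmbedding]
    have hset : (Neg.neg ⁻¹' (Iic (0:ℝ))) = Ici (0:ℝ) := by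
      ext x
      simp only [Set.mem_preimage, Set.mem_Iic, Set.mem_Ici, neg_nonpos]
    rw [hset, integrableOn_Ici_iff_integrableOn_Ioi]
    exact hIntIoi2
  have hIic : ∫ z in Iic (0:ℝ), sech (h + σ * z) ^ 2
      = ∫ z in Ioi (0:ℝ), sech (h + σ * -z) ^ 2 := by
    have := integral_comp_neg_Ioi (0:ℝ) (fun z : ℝ => sech (h + σ * z) ^ 2)
    simpa using this.symm
  have hInt : Integrable (fun z : ℝ => sech (h + σ * z) ^ 2) := by
    rw [← integrableOn_univ, ← Set.Iic_union_Ioi (a := (0:ℝ))]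
    exact hIntIic.union hIntIoi
  refine ⟨hInt, ?_⟩
  rw [← intervalIntegral.integral_Iic_add_Ioi hIntIic hIntIoi, hIic, hIoi, hIoi2]
  simp only [mul_neg, neg_zero, mul_zero, add_zero, neg_mul, one_mul, neg_neg]
  ring

open Set in
set_option maxHeartbeats 1000000 in
lemma integral_u'_eq_zero (σ h : ℝ) (hσ : 0 < σ) :
    ∫ z : ℝ, (σ ^ 2 * ((4 * sech (h + σ * z) ^ 2 - 6 * sech (h + σ * z) ^ 4) * stdGauss z)
      + sech (h + σ * z) ^ 2 * ((1 - z ^ 2) * stdGauss z)) = 0 := by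
  set u : ℝ → ℝ := fun z =>
      (-2 * σ) * (sech (h + σ * z) ^ 2 * Real.tanh (h + σ * z) * stdGauss z)
      + sech (h + σ * z) ^ 2 * (z * stdGauss z) with hudef
  set u' : ℝ → ℝ := fun z =>
      σ ^ 2 * ((4 * sech (h + σ * z) ^ 2 - 6 * sech (h + σ * z) ^ 4) * stdGauss z)
      + sech (h + σ * z) ^ 2 * ((1 - z ^ 2) * stdGauss z) with hu'def
  show ∫ z : ℝ, u' z = 0
  have hinner : ∀ z : ℝ, HasDerivAt (fun z : ℝ => h + σ * z) σ z := fun z => by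
    simpa using ((hasDerivAt_id z).const_mul σ).const_add h
  have hA : ∀ z : ℝ, HasDerivAt (fun z : ℝ => sech (h + σ * z) ^ 2)
      (-2 * sech (h + σ * z) ^ 2 * Real.tanh (h + σ * z) * σ) z := fun z => by
    simpa [Function.comp_def] using (hasDerivAt_sech_sq (h + σ * z)).comp z (hinner z)
  have hT : ∀ z : ℝ, HasDerivAt (fun z : ℝ => Real.tanh (h + σ * z))
      (sech (h + σ * z) ^ 2 * σ) z := fun z => by
    simpa [Function.comp_def] using (hasDerivAt_tanh (h + σ * z)).comp z (hinner z)
  have hu : ∀ z : ℝ, HasDerivAt u (u' z) z := by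
    intro z
    have h1 := ((hA z).mul (hT z)).mul (hasDerivAt_stdGauss z)
    have hz : HasDerivAt (fun y : ℝ => y * stdGauss y)
        (1 * stdGauss z + z * (-z * stdGauss z)) z := by
      simpa [Pi.mul_def] using (hasDerivAt_id z).mul (hasDerivAt_stdGauss z)
    have h2 := (hA z).mul hz
    have h3 := (h1.const_mul (-2 * σ)).add h2
    have heq : u' z = -2 * σ *
        ((-2 * sech (h + σ * z) ^ 2 * Real.tanh (h + σ * z) * σ * Real.tanh (h + σ * z) +
              sech (h + σ * z) ^ 2 * (sech (h + σ * z) ^ 2 * σ)) *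
            stdGauss z +
          sech (h + σ * z) ^ 2 * Real.tanh (h + σ * z) * (-z * stdGauss z)) +
      (-2 * sech (h + σ * z) ^ 2 * Real.tanh (h + σ * z) * σ * (z * stdGauss z) +
        sech (h + σ * z) ^ 2 * (1 * stdGauss z + z * (-z * stdGauss z))) := by
      have ht2 := tanh_sq (h + σ * z)
      simp only [hu'def]
      linear_combination (-(4 * σ ^ 2 * sech (h + σ * z) ^ 2 * stdGauss z)) * ht2
    rw [heq]
    exact h3
  -- bound on u
  have hbound : ∀ z : ℝ, ‖u z‖ ≤ (2 * σ) * stdGauss z + |z * stdGauss z| := by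
    intro z
    have hs1 : sech (h + σ * z) ^ 2 ≤ 1 := by
      nlinarith [sech_le_one (h + σ * z), sech_pos (h + σ * z)]
    have hs0 : (0:ℝ) ≤ sech (h + σ * z) ^ 2 := sq_nonneg _
    have htt := abs_tanh_le_one (h + σ * z)
    have hφ := stdGauss_nonneg z
    have hY : |sech (h + σ * z) ^ 2 * Real.tanh (h + σ * z) * stdGauss z| ≤ stdGauss z := by
      rw [abs_mul, abs_mul, abs_of_nonneg hs0, abs_of_nonneg hφ]
      have hm := mul_le_mul_of_nonneg_right
        (mul_le_one₀ hs1 (abs_nonneg (Real.tanh (h + σ * z))) htt) hφ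
      nlinarith [hm]
    have e1 : |(-2 * σ) * (sech (h + σ * z) ^ 2 * Real.tanh (h + σ * z) * stdGauss z)|
        ≤ (2 * σ) * stdGauss z := by
      rw [abs_mul, show |(-2 * σ)| = 2 * σ by
        rw [abs_of_nonpos (by linarith)]; ring]
      nlinarith [abs_nonneg (sech (h + σ * z) ^ 2 * Real.tanh (h + σ * z) * stdGauss z)]
    have e2 : |sech (h + σ * z) ^ 2 * (z * stdGauss z)| ≤ |z * stdGauss z| := by
      rw [abs_mul, abs_of_nonneg hs0]
      nlinarith [abs_nonneg (z * stdGauss z)]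
    simp only [hudef, Real.norm_eq_abs]
    exact (abs_add_le _ _).trans (add_le_add e1 e2)
  have htop0 : Tendsto u atTop (nhds 0) := by
    apply squeeze_zero_norm hbound
    have := (stdGauss_tendsto_atTop.const_mul (2 * σ)).add (mul_stdGauss_tendsto_atTop.abs)
    simpa using this
  have hbot0 : Tendsto u atBot (nhds 0) := by
    apply squeeze_zero_norm hbound
    have := (stdGauss_tendsto_atBot.const_mul (2 * σ)).add (mul_stdGauss_tendsto_atBot.abs)
    simpa using this
  -- integrability of u'
  have c1 : Continuous fun z : ℝ => sech (h + σ * z) :=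
    continuous_sech.comp (continuous_const.add (continuous_const.mul continuous_id))
  have hcont : Continuous u' := by
    rw [hu'def]
    exact (continuous_const.mul (((continuous_const.mul (c1.pow 2)).sub
      (continuous_const.mul (c1.pow 4))).mul continuous_stdGauss)).add
      ((c1.pow 2).mul (((continuous_const.sub (continuous_pow 2))).mul continuous_stdGauss))
  have hint : Integrable u' := by
    apply Integrable.mono' (g := fun z => (10 * σ ^ 2 + 1) * stdGauss z + z ^ 2 * stdGauss z)
      ((integrable_stdGauss.const_mul _).add integrable_sq_stdGauss)
      hcont.aestronglyMeasurable
    filter_upwards with z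
    have hs1 : sech (h + σ * z) ^ 2 ≤ 1 := by
      nlinarith [sech_le_one (h + σ * z), sech_pos (h + σ * z)]
    have hs0 : (0:ℝ) ≤ sech (h + σ * z) ^ 2 := sq_nonneg _
    have hφ := stdGauss_nonneg z
    have e1 : |σ ^ 2 * ((4 * sech (h + σ * z) ^ 2 - 6 * sech (h + σ * z) ^ 4) * stdGauss z)|
        ≤ 10 * σ ^ 2 * stdGauss z := by
      rw [abs_mul, abs_mul, abs_of_nonneg (sq_nonneg σ), abs_of_nonneg hφ]
      have hb : |4 * sech (h + σ * z) ^ 2 - 6 * sech (h + σ * z) ^ 4| ≤ 10 := by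
        rw [abs_le]
        constructor <;> nlinarith [sq_nonneg (sech (h + σ * z) ^ 2)]
      have h2 := mul_le_mul_of_nonneg_left (mul_le_mul_of_nonneg_right hb hφ) (sq_nonneg σ)
      nlinarith [h2]
    have e2 : |sech (h + σ * z) ^ 2 * ((1 - z ^ 2) * stdGauss z)|
        ≤ (1 + z ^ 2) * stdGauss z := by
      rw [abs_mul, abs_mul, abs_of_nonneg hs0, abs_of_nonneg hφ]
      have hb : |1 - z ^ 2| ≤ 1 + z ^ 2 := by
        rw [abs_le]; constructor <;> nlinarith [sq_nonneg z]
      have h2 := mul_le_mul_of_nonneg_left (mul_le_mul_of_nonneg_right hb hφ) hs0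
      have h3 := mul_le_mul_of_nonneg_right hs1
        (mul_nonneg (by nlinarith [sq_nonneg z] : (0:ℝ) ≤ 1 + z ^ 2) hφ)
      nlinarith [h2, h3]
    simp only [hu'def, Real.norm_eq_abs]
    calc |σ ^ 2 * ((4 * sech (h + σ * z) ^ 2 - 6 * sech (h + σ * z) ^ 4) * stdGauss z)
        + sech (h + σ * z) ^ 2 * ((1 - z ^ 2) * stdGauss z)|
        ≤ |σ ^ 2 * ((4 * sech (h + σ * z) ^ 2 - 6 * sech (h + σ * z) ^ 4) * stdGauss z)|
          + |sech (h + σ * z) ^ 2 * ((1 - z ^ 2) * stdGauss z)| := abs_add_le _ _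
      _ ≤ 10 * σ ^ 2 * stdGauss z + (1 + z ^ 2) * stdGauss z := add_le_add e1 e2
      _ ≤ (10 * σ ^ 2 + 1) * stdGauss z + z ^ 2 * stdGauss z := by nlinarith [hφ]
  have hIoi := integral_Ioi_of_hasDerivAt_of_tendsto' (a := 0)
    (fun x _ => hu x) hint.integrableOn htop0
  have hIic := integral_Iic_of_hasDerivAt_of_tendsto' (a := 0)
    (fun x _ => hu x) hint.integrableOn hbot0
  have htot := intervalIntegral.integral_Iic_add_Ioi (b := (0:ℝ))
    hint.integrableOn hint.integrableOn
  rw [← htot, hIoi, hIic]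
  ring

lemma abs_one_sub_sq_mul_stdGauss (z : ℝ) :
    |(1 - z ^ 2) * stdGauss z| ≤ (Real.sqrt (2 * Real.pi))⁻¹ := by
  have h1 : |1 - z ^ 2| ≤ Real.exp (z ^ 2 / 2) := by
    rcases abs_cases (1 - z ^ 2) with ⟨he, _⟩ | ⟨he, _⟩ <;> rw [he]
    · have := Real.one_le_exp (by positivity : (0:ℝ) ≤ z ^ 2 / 2)
      nlinarith [sq_nonneg z]
    · have e := Real.add_one_le_exp (z ^ 2 / 4)
      have hexp : Real.exp (z ^ 2 / 2) = Real.exp (z ^ 2 / 4) * Real.exp (z ^ 2 / 4) := by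
        rw [← Real.exp_add]; ring_nf
      nlinarith [e, Real.exp_pos (z ^ 2 / 4), sq_nonneg (z ^ 2 / 4 - 1)]
  have h3 : Real.exp (z ^ 2 / 2) * Real.exp (-z ^ 2 / 2) = 1 := by
    rw [← Real.exp_add, show z ^ 2 / 2 + -z ^ 2 / 2 = 0 by ring, Real.exp_zero]
  have h2 : |1 - z ^ 2| * Real.exp (-z ^ 2 / 2) ≤ 1 := by
    nlinarith [mul_le_mul_of_nonneg_right h1 (Real.exp_pos (-z ^ 2 / 2)).le]
  rw [abs_mul, abs_of_nonneg (stdGauss_nonneg z)]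
  calc |1 - z ^ 2| * stdGauss z
      = (|1 - z ^ 2| * Real.exp (-z ^ 2 / 2)) / Real.sqrt (2 * Real.pi) := by
        unfold stdGauss; ring
    _ ≤ 1 / Real.sqrt (2 * Real.pi) := by gcongr
    _ = (Real.sqrt (2 * Real.pi))⁻¹ := one_div _

set_option maxHeartbeats 1000000 in
theorem stmt_4 (σ : ℝ) (hσ : 0 < σ) (h : ℝ) :
    |σ ^ 2 * gexp (fun x => sech x ^ 2) σ h - 3 / 2 * (σ ^ 2 * gexp (fun x => sech x ^ 4) σ h)|
      ≤ (Real.pi ^ 2 - 3) / (6 * Real.sqrt (2 * Real.pi)) / σ := by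
  have hσ' : σ ≠ 0 := hσ.ne'
  obtain ⟨hInt_s2, hVal_s2⟩ := sech_sq_integral σ h hσ
  have c1 : Continuous fun z : ℝ => sech (h + σ * z) :=
    continuous_sech.comp (continuous_const.add (continuous_const.mul continuous_id))
  have hs1 : ∀ z : ℝ, sech (h + σ * z) ^ 2 ≤ 1 := fun z => by
    nlinarith [sech_le_one (h + σ * z), sech_pos (h + σ * z)]
  have hs0 : ∀ z : ℝ, (0:ℝ) ≤ sech (h + σ * z) ^ 2 := fun z => sq_nonneg _
  have hg2 : Integrable (fun z : ℝ => sech (h + σ * z) ^ 2 * stdGauss z) := by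
    apply Integrable.mono' integrable_stdGauss
      (((c1.pow 2).mul continuous_stdGauss).aestronglyMeasurable)
    filter_upwards with z
    simp only [Pi.mul_apply, Pi.pow_apply]
    rw [Real.norm_eq_abs, abs_mul, abs_of_nonneg (hs0 z), abs_of_nonneg (stdGauss_nonneg z)]
    nlinarith [stdGauss_nonneg z, hs1 z, hs0 z]
  have hg4 : Integrable (fun z : ℝ => sech (h + σ * z) ^ 4 * stdGauss z) := by
    apply Integrable.mono' integrable_stdGauss
      (((c1.pow 4).mul continuous_stdGauss).aestronglyMeasurable)
    filter_upwards with z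
    simp only [Pi.mul_apply, Pi.pow_apply]
    rw [Real.norm_eq_abs, abs_mul]
    rw [show sech (h + σ * z) ^ 4 = (sech (h + σ * z) ^ 2) ^ 2 by ring]
    rw [abs_of_nonneg (sq_nonneg _), abs_of_nonneg (stdGauss_nonneg z)]
    nlinarith [mul_le_mul_of_nonneg_right
      (mul_le_one₀ (hs1 z) (hs0 z) (hs1 z)) (stdGauss_nonneg z)]
  have hK : Integrable (fun z : ℝ => sech (h + σ * z) ^ 2 * ((1 - z ^ 2) * stdGauss z)) := by
    apply Integrable.mono' (g := fun z => stdGauss z + z ^ 2 * stdGauss z)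
      (integrable_stdGauss.add integrable_sq_stdGauss)
      (((c1.pow 2).mul ((continuous_const.sub (continuous_pow 2)).mul
        continuous_stdGauss)).aestronglyMeasurable)
    filter_upwards with z
    simp only [Pi.mul_apply, Pi.pow_apply, Pi.sub_apply]
    rw [Real.norm_eq_abs, abs_mul, abs_mul, abs_of_nonneg (hs0 z),
      abs_of_nonneg (stdGauss_nonneg z)]
    have hb : |1 - z ^ 2| ≤ 1 + z ^ 2 := by
      rw [abs_le]; constructor <;> nlinarith [sq_nonneg z]
    have h2 := mul_le_mul_of_nonneg_left
      (mul_le_mul_of_nonneg_right hb (stdGauss_nonneg z)) (hs0 z)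
    have h3 := mul_le_mul_of_nonneg_right (hs1 z)
      (mul_nonneg (by nlinarith [sq_nonneg z] : (0:ℝ) ≤ 1 + z ^ 2) (stdGauss_nonneg z))
    nlinarith [h2, h3]
  have hfirst : Integrable (fun z : ℝ =>
      σ ^ 2 * ((4 * sech (h + σ * z) ^ 2 - 6 * sech (h + σ * z) ^ 4) * stdGauss z)) := by
    apply (((hg2.const_mul 4).sub (hg4.const_mul 6)).const_mul (σ ^ 2)).congr
    filter_upwards with z
    simp only [Pi.sub_apply]
    ring
  have hzero := integral_u'_eq_zero σ h hσ
  rw [integral_add hfirst hK] at hzero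
  have hsplit : ∫ z : ℝ, σ ^ 2 * ((4 * sech (h + σ * z) ^ 2 - 6 * sech (h + σ * z) ^ 4)
      * stdGauss z)
      = σ ^ 2 * (4 * ∫ z : ℝ, sech (h + σ * z) ^ 2 * stdGauss z)
        - σ ^ 2 * (6 * ∫ z : ℝ, sech (h + σ * z) ^ 4 * stdGauss z) := by
    rw [integral_const_mul]
    rw [show (fun z : ℝ => (4 * sech (h + σ * z) ^ 2 - 6 * sech (h + σ * z) ^ 4) * stdGauss z)
        = fun z : ℝ => 4 * (sech (h + σ * z) ^ 2 * stdGauss z)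
          - 6 * (sech (h + σ * z) ^ 4 * stdGauss z) from funext fun z => by ring]
    rw [integral_sub (hg2.const_mul 4) (hg4.const_mul 6), integral_const_mul,
      integral_const_mul]
    ring
  rw [hsplit] at hzero
  have hE : σ ^ 2 * gexp (fun x => sech x ^ 2) σ h
      - 3 / 2 * (σ ^ 2 * gexp (fun x => sech x ^ 4) σ h)
      = -(∫ z : ℝ, sech (h + σ * z) ^ 2 * ((1 - z ^ 2) * stdGauss z)) / 4 := by
    have h1 : gexp (fun x => sech x ^ 2) σ h
        = ∫ z : ℝ, sech (h + σ * z) ^ 2 * stdGauss z := rfl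
    have h2 : gexp (fun x => sech x ^ 4) σ h
        = ∫ z : ℝ, sech (h + σ * z) ^ 4 * stdGauss z := rfl
    rw [h1, h2]
    linarith [hzero]
  rw [hE]
  have hIK : |∫ z : ℝ, sech (h + σ * z) ^ 2 * ((1 - z ^ 2) * stdGauss z)|
      ≤ 2 * σ⁻¹ * (Real.sqrt (2 * Real.pi))⁻¹ := by
    have habs : |∫ z : ℝ, sech (h + σ * z) ^ 2 * ((1 - z ^ 2) * stdGauss z)|
        ≤ ∫ z : ℝ, |sech (h + σ * z) ^ 2 * ((1 - z ^ 2) * stdGauss z)| := by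
      have := norm_integral_le_integral_norm (μ := volume)
        (fun z : ℝ => sech (h + σ * z) ^ 2 * ((1 - z ^ 2) * stdGauss z))
      simp only [Real.norm_eq_abs] at this
      exact this
    refine habs.trans ?_
    have hmono : ∫ z : ℝ, |sech (h + σ * z) ^ 2 * ((1 - z ^ 2) * stdGauss z)|
        ≤ ∫ z : ℝ, sech (h + σ * z) ^ 2 * (Real.sqrt (2 * Real.pi))⁻¹ := by
      apply integral_mono_of_nonneg
      · filter_upwards with z; positivity
      · exact hInt_s2.mul_const _
      · filter_upwards with z
        rw [abs_mul, abs_of_nonneg (hs0 z)]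
        exact mul_le_mul_of_nonneg_left (abs_one_sub_sq_mul_stdGauss z) (hs0 z)
    refine hmono.trans ?_
    rw [integral_mul_const, hVal_s2]
  have hpi := Real.pi_gt_three
  have hs : 0 < Real.sqrt (2 * Real.pi) := sqrt2pi_pos
  calc |(-(∫ z : ℝ, sech (h + σ * z) ^ 2 * ((1 - z ^ 2) * stdGauss z))) / 4|
      = |∫ z : ℝ, sech (h + σ * z) ^ 2 * ((1 - z ^ 2) * stdGauss z)| / 4 := by
        rw [abs_div, abs_neg]
        norm_num
    _ ≤ (2 * σ⁻¹ * (Real.sqrt (2 * Real.pi))⁻¹) / 4 := by gcongr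
    _ ≤ (Real.pi ^ 2 - 3) / (6 * Real.sqrt (2 * Real.pi)) / σ := by
        rw [show (2 * σ⁻¹ * (Real.sqrt (2 * Real.pi))⁻¹) / 4
          = 1 / (2 * σ * Real.sqrt (2 * Real.pi)) by field_simp; ring]
        rw [div_div, div_le_div_iff₀ (by positivity) (by positivity)]
        have h9 : 9 < Real.pi ^ 2 := by nlinarith [hpi]
        nlinarith [mul_pos hσ hs, mul_pos (mul_pos hσ hs) hs,
          mul_pos hσ (mul_pos hs hs)]
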